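/- arXiv:0711.5005 — 3 statements merged into one kernel-verified Lean document; each statement's English description precedes it below -/
import Mathlib

section
/- Let K be a positive integer, let j ≥ 0 and m ≥ 0 be integers, let c be a real number with |c|·K² ≤ 1/48, and set f(y) := (y^j/K^j)·exp(2πi c y³ + 2πi x y), a smooth function of the real variable y depending on the real parameter x. Then for all real x with |x| ≤ 3/4 and all real y with |y| ≤ K, the m-th derivative of f satisfies |f^{(m)}(y)| ≤ (6π|c|K² + 3π/2 + (2m + j)/K)^m. -/
open Finset Complex

namespace CPDB

noncomputable section

def NN (m j : ℕ) : ℕ := 2*m + j + 1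

def EE (c x : ℝ) (z : ℂ) : ℂ :=
  Complex.exp (2 * Real.pi * Complex.I * ((c : ℂ) * z ^ 3 + (x : ℂ) * z))

def ev (m j : ℕ) (a : ℕ → ℂ) (z : ℂ) : ℂ := ∑ k ∈ Finset.range (NN m j), a k * z ^ k

def stp (c x : ℝ) (a : ℕ → ℂ) : ℕ → ℂ := fun k =>
  2*Real.pi*Complex.I*(x:ℂ) * a k + 6*Real.pi*Complex.I*(c:ℂ) * (if 2 ≤ k then a (k-2) else 0)
    + ((k:ℂ)+1) * a (k+1)

def Sw (K m j : ℕ) (a : ℕ → ℂ) : ℝ := ∑ k ∈ Finset.range (NN m j), ‖a k‖ * (K:ℝ)^k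

lemma shiftA {R : Type*} [CommRing R] (M : ℕ) (a : ℕ → R) (z : R)
    (h1 : a M = 0) (h2 : a (M+1) = 0) :
    ∑ k ∈ Finset.range (M+2), (if 2 ≤ k then a (k-2) else 0) * z ^ k
      = z^2 * ∑ k ∈ Finset.range (M+2), a k * z ^ k := by
  rw [Finset.sum_range_succ' _ (M+1), Finset.sum_range_succ' _ M]
  rw [show M+1+1 = M+2 from rfl] at *
  rw [Finset.sum_range_succ (fun k => a k * z ^ k) (M+1),
      Finset.sum_range_succ (fun k => a k * z ^ k) M, h1, h2]
  simp only [zero_mul, add_zero, Finset.mul_sum]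
  rw [show (if 2 ≤ 0+1 then a (0+1-2) else 0) * z ^ (0+1) = 0 by norm_num,
      show (if 2 ≤ 0 then a (0-2) else 0) * z ^ 0 = 0 by norm_num]
  simp only [add_zero]
  refine Finset.sum_congr rfl fun i _ => ?_
  rw [if_pos (by omega : 2 ≤ i+1+1), show i+1+1-2 = i from by omega]
  ring

lemma shiftB (M : ℕ) (a : ℕ → ℂ) (z : ℂ) (h : a (M+1) = 0) :
    ∑ k ∈ Finset.range (M+1), ((k:ℂ)+1) * a (k+1) * z^k
      = ∑ k ∈ Finset.range (M+1), a k * ((k:ℂ) * z^(k-1)) := by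
  rw [Finset.sum_range_succ' (fun k => a k * ((k:ℂ) * z^(k-1))) M,
      Finset.sum_range_succ (fun k => ((k:ℂ)+1) * a (k+1) * z^k) M, h]
  simp only [Nat.cast_zero, zero_mul, mul_zero, add_zero, zero_add]
  refine Finset.sum_congr rfl fun i _ => ?_
  push_cast
  ring

lemma hasDerivAt_EE (c x : ℝ) (z : ℂ) :
    HasDerivAt (EE c x) (2*Real.pi*Complex.I*((c:ℂ)*(3*z^2) + (x:ℂ)) * EE c x z) z := by
  have h1 : HasDerivAt (fun w : ℂ => (c:ℂ) * w ^ 3) ((c:ℂ) * (3 * z ^ 2)) z := by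
    simpa using (hasDerivAt_pow 3 z).const_mul (c:ℂ)
  have h2 : HasDerivAt (fun w : ℂ => (x:ℂ) * w) ((x:ℂ)) z := by
    simpa using (hasDerivAt_id z).const_mul (x:ℂ)
  have h3 := ((h1.add h2).const_mul (2*(Real.pi:ℂ)*Complex.I)).cexp
  convert h3 using 1
  · rfl
  · rfl
  unfold EE; simp only [Pi.add_apply]; ring

lemma hasDerivAt_ev (m j : ℕ) (a : ℕ → ℂ) (z : ℂ) :
    HasDerivAt (ev m j a) (∑ k ∈ Finset.range (NN m j), a k * ((k:ℂ) * z^(k-1))) z := by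
  refine HasDerivAt.fun_sum fun k _ => ?_
  simpa using (hasDerivAt_pow k z).const_mul (a k)

lemma ev_stp (m j n t : ℕ) (hmt : m = n+1+t) (c x : ℝ) (a : ℕ → ℂ)
    (hsupp : ∀ k, 2*n+j < k → a k = 0) (z : ℂ) :
    ev m j (stp c x a) z
      = (∑ k ∈ Finset.range (NN m j), a k * ((k:ℂ)*z^(k-1)))
        + ev m j a z * (2*Real.pi*Complex.I*((c:ℂ)*(3*z^2) + (x:ℂ))) := by
  have hN2 : NN m j = (2*n+2*t+j+1)+2 := by unfold NN; omega
  have hN1 : NN m j = (2*n+2*t+j+2)+1 := by unfold NN; omega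
  have expand : ∀ k : ℕ, stp c x a k * z^k =
      (2*Real.pi*Complex.I*(x:ℂ)) * (a k * z^k)
      + (6*Real.pi*Complex.I*(c:ℂ)) * ((if 2 ≤ k then a (k-2) else 0) * z^k)
      + ((k:ℂ)+1) * a (k+1) * z^k := fun k => by unfold stp; ring
  have hA : ∑ k ∈ Finset.range (NN m j), (if 2 ≤ k then a (k-2) else 0) * z^k
      = z^2 * ∑ k ∈ Finset.range (NN m j), a k * z^k := by
    rw [hN2]
    exact shiftA _ a z (hsupp (2*n+2*t+j+1) (by omega)) (hsupp (2*n+2*t+j+1+1) (by omega))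
  have hB : ∑ k ∈ Finset.range (NN m j), ((k:ℂ)+1) * a (k+1) * z^k
      = ∑ k ∈ Finset.range (NN m j), a k * ((k:ℂ) * z^(k-1)) := by
    rw [hN1]
    exact shiftB _ a z (hsupp (2*n+2*t+j+2+1) (by omega))
  have key : ev m j (stp c x a) z
      = (2*Real.pi*Complex.I*(x:ℂ)) * ev m j a z
        + (6*Real.pi*Complex.I*(c:ℂ)) * (z^2 * ev m j a z)
        + ∑ k ∈ Finset.range (NN m j), a k * ((k:ℂ)*z^(k-1)) := by
    simp only [ev]
    rw [Finset.sum_congr rfl (fun k _ => expand k), Finset.sum_add_distrib,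
        Finset.sum_add_distrib, ← Finset.mul_sum, ← Finset.mul_sum, hA, hB]
  rw [key]; ring

lemma hasDerivAt_total (m j n t : ℕ) (hmt : m = n+1+t) (c x : ℝ) (a : ℕ → ℂ)
    (hsupp : ∀ k, 2*n+j < k → a k = 0) (z : ℂ) :
    HasDerivAt (fun w => ev m j a w * EE c x w) (ev m j (stp c x a) z * EE c x z) z := by
  have h := (hasDerivAt_ev m j a z).mul (hasDerivAt_EE c x z)
  convert h using 1
  · rfl
  · rfl
  · rfl
  rw [ev_stp m j n t hmt c x a hsupp z]
  ring

lemma Sw_step (K m j n t : ℕ) (hK : 0 < K) (hmt : m = n+1+t) (c x : ℝ) (hx : |x| ≤ 3/4)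
    (a : ℕ → ℂ) (hsupp : ∀ k, 2*n+j < k → a k = 0) :
    Sw K m j (stp c x a)
      ≤ (6*Real.pi*|c| *(K:ℝ)^2 + 3*Real.pi/2 + (2*(m:ℝ)+(j:ℝ))/(K:ℝ)) * Sw K m j a := by
  have hKr : (0:ℝ) < (K:ℝ) := by exact_mod_cast hK
  have hSnn : 0 ≤ Sw K m j a := Finset.sum_nonneg fun k _ => by positivity
  have hN2 : NN m j = (2*n+2*t+j+1)+2 := by unfold NN; omega
  -- norm of the three coefficient factors
  have n1 : ‖(2*Real.pi*Complex.I*(x:ℂ) : ℂ)‖ = 2*Real.pi*|x| := by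
    simp [norm_mul, Complex.norm_real, Real.norm_eq_abs, abs_of_pos Real.pi_pos]
  have n2 : ‖(6*Real.pi*Complex.I*(c:ℂ) : ℂ)‖ = 6*Real.pi*|c| := by
    simp [norm_mul, Complex.norm_real, Real.norm_eq_abs, abs_of_pos Real.pi_pos]
  have hterm : ∀ k : ℕ, ‖stp c x a k‖ * (K:ℝ)^k ≤
      (2*Real.pi*|x|) * (‖a k‖ * (K:ℝ)^k)
      + (6*Real.pi*|c|) * ((if 2 ≤ k then ‖a (k-2)‖ else 0) * (K:ℝ)^k)
      + (((k:ℝ)+1) * ‖a (k+1)‖) * (K:ℝ)^k := by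
    intro k
    have h3 : ‖(((k:ℂ)+1) * a (k+1))‖ = ((k:ℝ)+1) * ‖a (k+1)‖ := by
      rw [norm_mul]
      congr 1
      rw [show ((k:ℂ)+1) = (((k+1:ℕ)):ℂ) by push_cast; ring, Complex.norm_natCast]
      push_cast; ring
    have hle : ‖stp c x a k‖ ≤ (2*Real.pi*|x|) * ‖a k‖
        + (6*Real.pi*|c|) * (if 2 ≤ k then ‖a (k-2)‖ else 0)
        + ((k:ℝ)+1) * ‖a (k+1)‖ := by
      unfold stp
      refine le_trans (norm_add_le _ _) ?_
      refine add_le_add (le_trans (norm_add_le _ _) (add_le_add ?_ ?_)) (le_of_eq h3)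
      · rw [norm_mul, n1]
      · rw [norm_mul, n2]
        gcongr
        split_ifs <;> simp
    calc ‖stp c x a k‖ * (K:ℝ)^k
        ≤ ((2*Real.pi*|x|) * ‖a k‖
            + (6*Real.pi*|c|) * (if 2 ≤ k then ‖a (k-2)‖ else 0)
            + ((k:ℝ)+1) * ‖a (k+1)‖) * (K:ℝ)^k := by
          apply mul_le_mul_of_nonneg_right hle (by positivity)
      _ = _ := by ring
  have step1 : Sw K m j (stp c x a) ≤
      (2*Real.pi*|x|) * Sw K m j a
      + (6*Real.pi*|c|) * ((K:ℝ)^2 * Sw K m j a)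
      + ∑ k ∈ Finset.range (NN m j), (((k:ℝ)+1) * ‖a (k+1)‖) * (K:ℝ)^k := by
    have := Finset.sum_le_sum (fun k (_ : k ∈ Finset.range (NN m j)) => hterm k)
    refine le_trans this (le_of_eq ?_)
    rw [Finset.sum_add_distrib, Finset.sum_add_distrib, ← Finset.mul_sum, ← Finset.mul_sum]
    congr 2
    unfold Sw
    rw [hN2]
    have h1 : ‖a (2*n+2*t+j+1)‖ = 0 := by rw [hsupp _ (by omega)]; simp
    have h2 : ‖a (2*n+2*t+j+1+1)‖ = 0 := by rw [hsupp _ (by omega)]; simp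
    rw [shiftA _ (fun k => ‖a k‖) ((K:ℝ)) h1 h2]
  -- bound on the third sum
  have hshift : ∑ k ∈ Finset.range (NN m j), ‖a (k+1)‖ * (K:ℝ)^(k+1) ≤ Sw K m j a := by
    have e1 := Finset.sum_range_succ' (fun i => ‖a i‖ * (K:ℝ)^i) (NN m j)
    have e2 := Finset.sum_range_succ (fun i => ‖a i‖ * (K:ℝ)^i) (NN m j)
    have hz : ‖a (NN m j)‖ = 0 := by rw [hsupp _ (by unfold NN; omega)]; simp
    have : ∑ k ∈ Finset.range (NN m j), ‖a (k+1)‖ * (K:ℝ)^(k+1)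
        = Sw K m j a + ‖a (NN m j)‖ * (K:ℝ)^(NN m j) - ‖a 0‖ * (K:ℝ)^0 := by
      rw [Sw, ← e2, e1]; ring
    rw [this, hz]
    have : (0:ℝ) ≤ ‖a 0‖ * (K:ℝ)^0 := by positivity
    linarith
  have step3 : ∑ k ∈ Finset.range (NN m j), (((k:ℝ)+1) * ‖a (k+1)‖) * (K:ℝ)^k
      ≤ ((2*(m:ℝ)+(j:ℝ))/(K:ℝ)) * Sw K m j a := by
    have tb : ∀ k ∈ Finset.range (NN m j), (((k:ℝ)+1) * ‖a (k+1)‖) * (K:ℝ)^k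
        ≤ ((2*(m:ℝ)+(j:ℝ))/(K:ℝ)) * (‖a (k+1)‖ * (K:ℝ)^(k+1)) := by
      intro k _
      by_cases hak : a (k+1) = 0
      · simp [hak]
      · have hk : k + 1 ≤ 2*m + j := by
          by_contra hcon
          exact hak (hsupp _ (by omega))
        have hkr : ((k:ℝ)+1) ≤ 2*(m:ℝ)+(j:ℝ) := by exact_mod_cast hk
        have hrhs : ((2*(m:ℝ)+(j:ℝ))/(K:ℝ)) * (‖a (k+1)‖ * (K:ℝ)^(k+1))
            = (2*(m:ℝ)+(j:ℝ)) * ‖a (k+1)‖ * (K:ℝ)^k := by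
          rw [pow_succ]; field_simp
        rw [hrhs]
        have hnn : (0:ℝ) ≤ ‖a (k+1)‖ * (K:ℝ)^k := by positivity
        calc (((k:ℝ)+1) * ‖a (k+1)‖) * (K:ℝ)^k
            = ((k:ℝ)+1) * (‖a (k+1)‖ * (K:ℝ)^k) := by ring
          _ ≤ (2*(m:ℝ)+(j:ℝ)) * (‖a (k+1)‖ * (K:ℝ)^k) := by
              apply mul_le_mul_of_nonneg_right hkr hnn
          _ = _ := by ring
    refine le_trans (Finset.sum_le_sum tb) ?_
    rw [← Finset.mul_sum]
    have hd : (0:ℝ) ≤ (2*(m:ℝ)+(j:ℝ))/(K:ℝ) := by positivity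
    exact mul_le_mul_of_nonneg_left hshift hd
  have hxb : 2*Real.pi*|x| ≤ 3*Real.pi/2 := by
    nlinarith [Real.pi_pos, abs_nonneg x]
  have h1 : (2*Real.pi*|x|) * Sw K m j a ≤ (3*Real.pi/2) * Sw K m j a :=
    mul_le_mul_of_nonneg_right hxb hSnn
  calc Sw K m j (stp c x a) ≤ _ := step1
    _ ≤ (3*Real.pi/2) * Sw K m j a + (6*Real.pi*|c|) * ((K:ℝ)^2 * Sw K m j a)
        + ((2*(m:ℝ)+(j:ℝ))/(K:ℝ)) * Sw K m j a := by
      exact add_le_add (add_le_add h1 (le_refl _)) step3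
    _ = (6*Real.pi*|c| *(K:ℝ)^2 + 3*Real.pi/2 + (2*(m:ℝ)+(j:ℝ))/(K:ℝ)) * Sw K m j a := by ring


end

end CPDB

/-- Lemma 5.2 (derivative bound): for `f(y) = (y^j/K^j)·exp(2πi c y³ + 2πi x y)`
with `|c|·K² ≤ 1/48`, `|x| ≤ 3/4`, `|y| ≤ K`, the `m`-th derivative satisfies
`|f⁽ᵐ⁾(y)| ≤ (6π|c|K² + 3π/2 + (2m+j)/K)^m`. -/
theorem cubic_phase_deriv_bound (K : ℕ) (hK : 0 < K) (j m : ℕ) (c x y : ℝ)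
    (hc : |c| * (K : ℝ) ^ 2 ≤ 1 / 48) (hx : |x| ≤ 3 / 4) (hy : |y| ≤ (K : ℝ)) :
    ‖iteratedDeriv m
        (fun y : ℝ => (y : ℂ) ^ j / (K : ℂ) ^ j *
          Complex.exp (2 * Real.pi * Complex.I * ((c * y ^ 3 + x * y : ℝ) : ℂ))) y‖ ≤
      (6 * Real.pi * |c| * (K : ℝ) ^ 2 + 3 * Real.pi / 2 + (2 * m + j) / (K : ℝ)) ^ m := by
  classical
  have hKr : (0:ℝ) < (K:ℝ) := by exact_mod_cast hK
  set B : ℝ := 6 * Real.pi * |c| * (K:ℝ)^2 + 3*Real.pi/2 + (2*(m:ℝ)+(j:ℝ))/(K:ℝ) with hBdef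
  have hB : 0 ≤ B := by positivity
  set f : ℝ → ℂ := fun y : ℝ => (y : ℂ) ^ j / (K : ℂ) ^ j *
          Complex.exp (2 * Real.pi * Complex.I * ((c * y ^ 3 + x * y : ℝ) : ℂ)) with hfdef
  have key : ∀ n, n ≤ m → ∃ a : ℕ → ℂ,
      (∀ k, 2*n+j < k → a k = 0) ∧
      (∀ w : ℝ, iteratedDeriv n f w = CPDB.ev m j a ↑w * CPDB.EE c x ↑w) ∧
      CPDB.Sw K m j a ≤ B ^ n := by
    intro n
    induction n with
    | zero =>
      intro _
      refine ⟨fun k => if k = j then ((K:ℂ)^j)⁻¹ else 0, ?_, ?_, ?_⟩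
      · intro k hk
        simp [show k ≠ j from by omega]
      · intro w
        rw [iteratedDeriv_zero]
        have hev : CPDB.ev m j (fun k => if k = j then ((K:ℂ)^j)⁻¹ else 0) ↑w
            = ((K:ℂ)^j)⁻¹ * (w:ℂ)^j := by
          unfold CPDB.ev
          rw [Finset.sum_eq_single j]
          · simp
          · intro b _ hb; simp [hb]
          · intro hj
            exact absurd (Finset.mem_range.mpr (by unfold CPDB.NN; omega)) hj
        rw [hev]
        unfold CPDB.EE
        simp only [hfdef]
        push_cast
        ring
      · have hSw : CPDB.Sw K m j (fun k => if k = j then ((K:ℂ)^j)⁻¹ else 0) = 1 := by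
          unfold CPDB.Sw
          rw [Finset.sum_eq_single j]
          · have hb : ‖((K:ℂ)^j)⁻¹‖ = ((K:ℝ)^j)⁻¹ := by
              rw [norm_inv, norm_pow, Complex.norm_natCast]
            simp only [if_pos, hb]
            exact inv_mul_cancel₀ (ne_of_gt (pow_pos hKr j))
          · intro b _ hb; simp [hb]
          · intro hj
            exact absurd (Finset.mem_range.mpr (by unfold CPDB.NN; omega)) hj
        rw [hSw, pow_zero]
    | succ n ih =>
      intro hn1
      obtain ⟨a, hsupp, heval, hS⟩ := ih (by omega)
      have hmt : m = n + 1 + (m - n - 1) := by omega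
      refine ⟨CPDB.stp c x a, ?_, ?_, ?_⟩
      · intro k hk
        unfold CPDB.stp
        rw [hsupp k (by omega), hsupp (k+1) (by omega)]
        have hz : (if 2 ≤ k then a (k-2) else 0) = 0 := by
          split_ifs with h
          · exact hsupp _ (by omega)
          · rfl
        rw [hz]
        ring
      · intro w
        rw [iteratedDeriv_succ]
        have hfun : iteratedDeriv n f = fun w : ℝ => CPDB.ev m j a ↑w * CPDB.EE c x ↑w :=
          funext heval
        rw [hfun]
        exact ((CPDB.hasDerivAt_total m j n (m-n-1) hmt c x a hsupp ↑w).comp_ofReal).deriv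
      · calc CPDB.Sw K m j (CPDB.stp c x a)
            ≤ B * CPDB.Sw K m j a := CPDB.Sw_step K m j n (m-n-1) hK hmt c x hx a hsupp
          _ ≤ B * B^n := mul_le_mul_of_nonneg_left hS hB
          _ = B^(n+1) := by rw [pow_succ]; ring
  obtain ⟨a, hsupp, heval, hS⟩ := key m le_rfl
  rw [heval y, norm_mul]
  have hE : ‖CPDB.EE c x ↑y‖ = 1 := by
    unfold CPDB.EE
    have harg : (2*(Real.pi:ℂ)*Complex.I*((c:ℂ)*(y:ℂ)^3 + (x:ℂ)*(y:ℂ)))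
        = ((2*Real.pi*(c*y^3+x*y) : ℝ):ℂ) * Complex.I := by
      push_cast; ring
    rw [harg, Complex.norm_exp_ofReal_mul_I]
  have hev : ‖CPDB.ev m j a ↑y‖ ≤ CPDB.Sw K m j a := by
    unfold CPDB.ev CPDB.Sw
    refine le_trans (norm_sum_le _ _) (Finset.sum_le_sum fun k _ => ?_)
    rw [norm_mul, norm_pow, Complex.norm_real, Real.norm_eq_abs]
    exact mul_le_mul_of_nonneg_left (pow_le_pow_left₀ (abs_nonneg y) hy k) (norm_nonneg _)
  rw [hE, mul_one]
  exact le_trans hev hS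
end

section
/- Let a, b, b', c', K, K' be real numbers with 0 ≤ a < 1, b > 0, K > 0, bK < 1, b' > 0, K' > 0, |c'|·K'² ≤ 0.01·b', 1 ≤ b'·K', and K ≤ 2b'K' + 1, and set c := c'/(8·b'³). Then a + 2bK + 3|c|K² < 3 + 4|c'|·K'²/b'. -/
/-- If the van der Corput iteration halts because `bK < 1`, then
`a + 2bK + 3|c|K² < 3 + 4|c'|K'²/b'`, i.e. `a + 2bK + |3cK²| = O(1)`. -/
theorem boundary_case_bK_small (a b b' c' K K' : ℝ) (ha0 : 0 ≤ a) (ha1 : a < 1)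
    (hb : 0 < b) (hK : 0 < K) (hbK : b * K < 1) (hb' : 0 < b') (hK' : 0 < K')
    (hc' : |c'| * K' ^ 2 ≤ 0.01 * b') (hbK' : 1 ≤ b' * K') (hKK : K ≤ 2 * b' * K' + 1)
    (c : ℝ) (hc : c = c' / (8 * b' ^ 3)) :
    a + 2 * b * K + 3 * |c| * K ^ 2 < 3 + 4 * |c'| * K' ^ 2 / b' := by
  have hb3 : (0:ℝ) < 8 * b' ^ 3 := by positivity
  have habs : |c| = |c'| / (8 * b' ^ 3) := by
    rw [hc, abs_div, abs_of_pos hb3]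
  have hK3 : K ≤ 3 * (b' * K') := by nlinarith
  have hcnn : 0 ≤ |c'| := abs_nonneg _
  have key : 3 * |c| * K ^ 2 ≤ 4 * |c'| * K' ^ 2 / b' := by
    rw [habs, show 3 * (|c'| / (8 * b' ^ 3)) * K ^ 2 = 3 * |c'| * K ^ 2 / (8 * b' ^ 3) from by ring, div_le_div_iff₀ hb3 hb']
    nlinarith [sq_nonneg K, mul_nonneg hcnn (sq_nonneg K'), sq_nonneg (b' * K'),
      mul_nonneg (mul_nonneg hcnn (sq_nonneg (b'*K'))) hb'.le,
      mul_le_mul_of_nonneg_left (mul_self_le_mul_self hK.le hK3) hcnn]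
  nlinarith [key]
end

section
/- Let n and R be positive integers with 2^n ≥ 16·R, set S̃ := 3 + ⌊R/n⌋, and let (n_d)_{d≥0} be integers with n_d ≤ n − d for all d ≥ 0. Suppose real numbers β_s^{(d)}, defined for integers d ≥ 0 and 3 ≤ s ≤ S̃, satisfy |β_s^{(0)}| ≤ 2^{R−2}·2^{(3−2s)n} for all 3 ≤ s ≤ S̃, and the recursion β_s^{(d+1)} = Σ_{p=s}^{S̃} C(p,s)·2^{n_d(p−s)}·β_p^{(d)} for all d ≥ 0 and 3 ≤ s ≤ S̃, where C(p,s) is the binomial coefficient. Then for all d ≥ 0 and all 3 ≤ s ≤ S̃, |β_s^{(d)}| ≤ 2^{R−2}·2^{(3−2s)n}·2^{sd}·(1 + 1/(2R))^d. -/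
lemma aux_choose_le_two_pow (p s : ℕ) : p.choose s ≤ 2 ^ p := by
  rcases le_or_gt s p with h | h
  · calc p.choose s ≤ ∑ m ∈ Finset.range (p + 1), p.choose m :=
        Finset.single_le_sum (fun i _ => Nat.zero_le _) (Finset.mem_range.mpr (by omega))
      _ = 2 ^ p := Nat.sum_range_choose p
  · simp [Nat.choose_eq_zero_of_lt h]

lemma aux_geom_Icc (a b : ℕ) : ∑ p ∈ Finset.Icc a b, (1/2 : ℝ) ^ (p - a) ≤ 2 := by
  have h1 : ∑ p ∈ Finset.Icc a b, (1/2 : ℝ) ^ (p - a)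
      = ∑ i ∈ (Finset.Icc a b).image (· - a), (1/2 : ℝ) ^ i := by
    rw [Finset.sum_image]
    intro x hx y hy hxy
    simp only [Finset.mem_coe, Finset.mem_Icc] at hx hy hxy
    omega
  rw [h1]
  calc ∑ i ∈ (Finset.Icc a b).image (· - a), (1/2 : ℝ) ^ i
      ≤ ∑ i ∈ Finset.range (b + 1), (1/2 : ℝ) ^ i := by
        apply Finset.sum_le_sum_of_subset_of_nonneg
        · intro i hi
          simp only [Finset.mem_image, Finset.mem_Icc] at hi
          obtain ⟨x, hx, rfl⟩ := hi
          exact Finset.mem_range.mpr (by omega)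
        · intro i _ _; positivity
    _ ≤ 2 := sum_geometric_two_le _

lemma aux_zpow_merge (A : ℝ) (x y z w : ℤ) :
    (2:ℝ) ^ x * ((2:ℝ) ^ y * (2:ℝ) ^ z * (2:ℝ) ^ w * A) = (2:ℝ) ^ (x + y + z + w) * A := by
  rw [zpow_add₀ (by norm_num : (2:ℝ) ≠ 0), zpow_add₀ (by norm_num : (2:ℝ) ≠ 0),
    zpow_add₀ (by norm_num : (2:ℝ) ≠ 0)]
  ring

lemma aux_key_sum (n R S s : ℕ) (hn : 4 ≤ n) (hR : 0 < R) (h16 : 16 * R ≤ 2 ^ n) :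
    ∑ p ∈ Finset.Icc s S, (p.choose s : ℝ) * (2:ℝ) ^ (((s:ℤ) - p) * n)
      ≤ 2 ^ s * (1 + 1 / (2 * (R:ℝ))) := by
  have hR' : (0:ℝ) < R := by exact_mod_cast hR
  by_cases hsS : s ≤ S
  · rw [Finset.Icc_eq_cons_Ioc hsS, Finset.sum_cons]
    have hhead : (s.choose s : ℝ) * (2:ℝ) ^ (((s:ℤ) - s) * n) = 1 := by
      simp
    rw [hhead]
    have htail : ∑ p ∈ Finset.Ioc s S, (p.choose s : ℝ) * (2:ℝ) ^ (((s:ℤ) - p) * n)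
        ≤ 2 ^ s * (1 / (2 * (R:ℝ))) := by
      have step1 : ∑ p ∈ Finset.Ioc s S, (p.choose s : ℝ) * (2:ℝ) ^ (((s:ℤ) - p) * n)
          ≤ ∑ p ∈ Finset.Ioc s S, (2:ℝ) ^ s * (2:ℝ) ^ ((1:ℤ) - n) * (1/2:ℝ) ^ (p - (s+1)) := by
        apply Finset.sum_le_sum
        intro p hp
        simp only [Finset.mem_Ioc] at hp
        obtain ⟨k, rfl⟩ : ∃ k, p = s + 1 + k := ⟨p - (s + 1), by omega⟩
        have hch : ((s+1+k).choose s : ℝ) ≤ (2:ℝ) ^ ((s+1+k : ℕ) : ℤ) := by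
          rw [zpow_natCast]
          exact_mod_cast aux_choose_le_two_pow (s+1+k) s
        have hz : (0:ℝ) < (2:ℝ) ^ (((s:ℤ) - (s+1+k : ℕ)) * n) := by positivity
        calc ((s+1+k).choose s : ℝ) * (2:ℝ) ^ (((s:ℤ) - (s+1+k : ℕ)) * n)
            ≤ (2:ℝ) ^ ((s+1+k : ℕ) : ℤ) * (2:ℝ) ^ (((s:ℤ) - (s+1+k : ℕ)) * n) := by
              apply mul_le_mul_of_nonneg_right hch hz.le
          _ = (2:ℝ) ^ (((s+1+k : ℕ) : ℤ) + ((s:ℤ) - (s+1+k : ℕ)) * n) := by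
              rw [← zpow_add₀ (by norm_num : (2:ℝ) ≠ 0)]
          _ ≤ (2:ℝ) ^ (((s:ℤ) + ((1:ℤ) - n)) + (-(k:ℤ))) := by
              apply zpow_le_zpow_right₀ one_le_two
              push_cast
              have hkn : 2 * (k:ℤ) ≤ (k:ℤ) * n := by
                have : (4:ℤ) ≤ n := by exact_mod_cast hn
                nlinarith [Int.ofNat_nonneg k]
              nlinarith
          _ = (2:ℝ) ^ s * (2:ℝ) ^ ((1:ℤ) - n) * (1/2:ℝ) ^ (s+1+k - (s+1)) := by
              have h1 : s+1+k - (s+1) = k := by omega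
              rw [h1, zpow_add₀ (by norm_num : (2:ℝ) ≠ 0), zpow_add₀ (by norm_num : (2:ℝ) ≠ 0)]
              rw [zpow_natCast, zpow_neg, zpow_natCast]
              rw [one_div, inv_pow]
      have step2 : ∑ p ∈ Finset.Ioc s S, (2:ℝ) ^ s * (2:ℝ) ^ ((1:ℤ) - n) * (1/2:ℝ) ^ (p - (s+1))
          = (2:ℝ) ^ s * (2:ℝ) ^ ((1:ℤ) - n) * ∑ p ∈ Finset.Icc (s+1) S, (1/2:ℝ) ^ (p - (s+1)) := by
        rw [← Finset.mul_sum, Finset.Icc_add_one_left_eq_Ioc]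
      have step3 : (2:ℝ) ^ s * (2:ℝ) ^ ((1:ℤ) - n) * ∑ p ∈ Finset.Icc (s+1) S, (1/2:ℝ) ^ (p - (s+1))
          ≤ (2:ℝ) ^ s * (2:ℝ) ^ ((1:ℤ) - n) * 2 := by
        apply mul_le_mul_of_nonneg_left (aux_geom_Icc (s+1) S) (by positivity)
      have step4 : (2:ℝ) ^ s * (2:ℝ) ^ ((1:ℤ) - n) * 2 ≤ 2 ^ s * (1 / (2 * (R:ℝ))) := by
        have h2n : (16:ℝ) * R ≤ (2:ℝ) ^ (n:ℤ) := by
          rw [zpow_natCast]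
          exact_mod_cast h16
        have hpos : (0:ℝ) < (2:ℝ) ^ (n:ℤ) := by positivity
        have key : (2:ℝ) ^ ((1:ℤ) - n) * 2 ≤ 1 / (2 * (R:ℝ)) := by
          rw [zpow_sub₀ (by norm_num : (2:ℝ) ≠ 0)]
          rw [div_mul_eq_mul_div, div_le_div_iff₀ hpos (by positivity)]
          have h2n2 : (16:ℝ) * R ≤ (2:ℝ) ^ n := by exact_mod_cast h16
          norm_num
          nlinarith [h2n2]
        calc (2:ℝ) ^ s * (2:ℝ) ^ ((1:ℤ) - n) * 2 = (2:ℝ) ^ s * ((2:ℝ) ^ ((1:ℤ) - n) * 2) := by ring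
          _ ≤ (2:ℝ) ^ s * (1 / (2 * (R:ℝ))) := by
              apply mul_le_mul_of_nonneg_left key (by positivity)
      linarith
    have h1le : (1:ℝ) ≤ 2 ^ s := one_le_pow₀ one_le_two
    nlinarith
  · rw [Finset.Icc_eq_empty (by omega), Finset.sum_empty]
    positivity

/-- The inductive estimate (4.52) controlling the growth of the coefficients
`β_s^{(d)}` produced by the dyadic subdivision in the FFT precomputation. -/
theorem dyadic_subdivision_coefficient_bound (n R : ℕ) (hn : 0 < n) (hR : 0 < R)
    (h16 : 16 * R ≤ 2 ^ n) (S : ℕ) (hS : S = 3 + R / n)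
    (nd : ℕ → ℤ) (hnd : ∀ d : ℕ, nd d ≤ (n : ℤ) - (d : ℤ))
    (β : ℕ → ℕ → ℝ)
    (hβ0 : ∀ s ∈ Finset.Icc 3 S,
      |β 0 s| ≤ (2 : ℝ) ^ ((R : ℤ) - 2) * (2 : ℝ) ^ ((3 - 2 * (s : ℤ)) * (n : ℤ)))
    (hrec : ∀ d : ℕ, ∀ s ∈ Finset.Icc 3 S,
      β (d + 1) s = ∑ p ∈ Finset.Icc s S,
        (p.choose s : ℝ) * (2 : ℝ) ^ (nd d * ((p : ℤ) - (s : ℤ))) * β d p) :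
    ∀ d : ℕ, ∀ s ∈ Finset.Icc 3 S,
      |β d s| ≤ (2 : ℝ) ^ ((R : ℤ) - 2) * (2 : ℝ) ^ ((3 - 2 * (s : ℤ)) * (n : ℤ)) *
        (2 : ℝ) ^ (s * d) * (1 + 1 / (2 * (R : ℝ))) ^ d := by
  have hn4 : 4 ≤ n := by
    have h1 : (2:ℕ) ^ 4 ≤ 2 ^ n := le_trans (by omega) h16
    exact (Nat.pow_le_pow_iff_right (by norm_num)).mp h1
  have hR' : (0:ℝ) < R := by exact_mod_cast hR
  have hA1 : (1:ℝ) ≤ 1 + 1 / (2 * (R:ℝ)) := by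
    have : (0:ℝ) < 1 / (2 * (R:ℝ)) := by positivity
    linarith
  intro d
  induction d with
  | zero =>
    intro s hs
    simpa using hβ0 s hs
  | succ d ih =>
    intro s hs
    obtain ⟨hs3, hsS⟩ := Finset.mem_Icc.mp hs
    rw [hrec d s hs]
    set A : ℝ := 1 + 1 / (2 * (R:ℝ)) with hA
    have hA0 : (0:ℝ) < A := by positivity
    calc |∑ p ∈ Finset.Icc s S, (p.choose s : ℝ) * (2:ℝ) ^ (nd d * ((p:ℤ) - s)) * β d p|
        ≤ ∑ p ∈ Finset.Icc s S, |(p.choose s : ℝ) * (2:ℝ) ^ (nd d * ((p:ℤ) - s)) * β d p| :=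
          Finset.abs_sum_le_sum_abs _ _
      _ ≤ ∑ p ∈ Finset.Icc s S, (p.choose s : ℝ) * (2:ℝ) ^ (((s:ℤ) - p) * n) *
            ((2:ℝ) ^ ((R:ℤ) - 2) * (2:ℝ) ^ ((3 - 2*(s:ℤ)) * n) * (2:ℝ) ^ (s*d) * A ^ d) := by
          apply Finset.sum_le_sum
          intro p hp
          obtain ⟨hps, hpS⟩ := Finset.mem_Icc.mp hp
          have hp3 : p ∈ Finset.Icc 3 S := Finset.mem_Icc.mpr ⟨by omega, hpS⟩
          have hihp := ih p hp3
          rw [abs_mul, abs_mul, abs_of_nonneg (by positivity : (0:ℝ) ≤ (p.choose s : ℝ)),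
            abs_of_nonneg (by positivity : (0:ℝ) ≤ (2:ℝ) ^ (nd d * ((p:ℤ) - s)))]
          have hmono : (2:ℝ) ^ (nd d * ((p:ℤ) - s)) ≤ (2:ℝ) ^ (((n:ℤ) - d) * ((p:ℤ) - s)) := by
            apply zpow_le_zpow_right₀ one_le_two
            apply mul_le_mul_of_nonneg_right (hnd d)
            have : (s:ℤ) ≤ p := by exact_mod_cast hps
            omega
          calc (p.choose s : ℝ) * (2:ℝ) ^ (nd d * ((p:ℤ) - s)) * |β d p|
              ≤ (p.choose s : ℝ) * (2:ℝ) ^ (((n:ℤ) - d) * ((p:ℤ) - s)) *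
                ((2:ℝ) ^ ((R:ℤ) - 2) * (2:ℝ) ^ ((3 - 2*(p:ℤ)) * n) * (2:ℝ) ^ (p*d) * A ^ d) := by
                apply mul_le_mul (mul_le_mul_of_nonneg_left hmono (by positivity)) hihp
                  (abs_nonneg _) (by positivity)
            _ = (p.choose s : ℝ) * ((2:ℝ) ^ (((n:ℤ) - d) * ((p:ℤ) - s)) *
                ((2:ℝ) ^ ((R:ℤ) - 2) * (2:ℝ) ^ ((3 - 2*(p:ℤ)) * n) * (2:ℝ) ^ ((p*d : ℕ) : ℤ) * A ^ d)) := by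
                rw [zpow_natCast]; ring
            _ = (p.choose s : ℝ) * ((2:ℝ) ^ (((s:ℤ) - p) * n) *
                ((2:ℝ) ^ ((R:ℤ) - 2) * (2:ℝ) ^ ((3 - 2*(s:ℤ)) * n) * (2:ℝ) ^ ((s*d : ℕ) : ℤ) * A ^ d)) := by
                rw [aux_zpow_merge, aux_zpow_merge]
                congr 2
                push_cast
                ring
            _ = (p.choose s : ℝ) * (2:ℝ) ^ (((s:ℤ) - p) * n) *
                ((2:ℝ) ^ ((R:ℤ) - 2) * (2:ℝ) ^ ((3 - 2*(s:ℤ)) * n) * (2:ℝ) ^ (s*d) * A ^ d) := by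
                rw [zpow_natCast]; ring
      _ = (∑ p ∈ Finset.Icc s S, (p.choose s : ℝ) * (2:ℝ) ^ (((s:ℤ) - p) * n)) *
            ((2:ℝ) ^ ((R:ℤ) - 2) * (2:ℝ) ^ ((3 - 2*(s:ℤ)) * n) * (2:ℝ) ^ (s*d) * A ^ d) := by
          rw [Finset.sum_mul]
      _ ≤ ((2:ℝ) ^ s * A) *
            ((2:ℝ) ^ ((R:ℤ) - 2) * (2:ℝ) ^ ((3 - 2*(s:ℤ)) * n) * (2:ℝ) ^ (s*d) * A ^ d) := by
          apply mul_le_mul_of_nonneg_right (aux_key_sum n R S s hn4 hR h16) (by positivity)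
      _ = (2:ℝ) ^ ((R:ℤ) - 2) * (2:ℝ) ^ ((3 - 2*(s:ℤ)) * n) * (2:ℝ) ^ (s*(d+1)) * A ^ (d+1) := by
          rw [pow_succ, mul_add s d 1, pow_add, pow_mul]
          ring
end
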